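/- Let f₁, f₂ : X → [−M, M] and suppose |y| ≤ M a.s. under each distribution P_j. Define u(x,y) = (f₁(x) − y)² − (f₂(x) − y)². Then for each j, Var_{(x,y)∼P_j}[u(x,y)] ≤ 32M²·(E_j(f₁) + E_j(f₂)), where E_j(f) = E_{x∼P_j}[(f(x) − f_j*(x))²] is the excess risk with f_j*(x) = E_{P_j}[y | x]. -/

import Mathlib

open MeasureTheory ProbabilityTheory

/-- With `u(x,y) = (f₁(x)-y)² - (f₂(x)-y)²`, for `f₁, f₂` bounded by `M` and responses
bounded by `M` a.s. under `P`, we have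
`Var_P[u] ≤ 32 M² (E(f₁) + E(f₂))`, where `E(f) = E_{x∼P}[(f(x) - f*(x))²]` is the
excess risk and `f*(x) = E_P[y | x]` is the conditional mean (formalized via the
conditional expectation of the second coordinate given the σ-algebra generated by
the first coordinate). -/
theorem variance_gap_bound {X : Type*} [MeasurableSpace X]
    (P : Measure (X × ℝ)) [IsProbabilityMeasure P]
    (M : ℝ) (hM : 1 ≤ M)
    (f₁ f₂ : X → ℝ) (hf₁m : Measurable f₁) (hf₂m : Measurable f₂)
    (hf₁ : ∀ x, |f₁ x| ≤ M) (hf₂ : ∀ x, |f₂ x| ≤ M)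
    (hy : ∀ᵐ p ∂P, |p.2| ≤ M) :
    variance (fun p : X × ℝ => (f₁ p.1 - p.2) ^ 2 - (f₂ p.1 - p.2) ^ 2) P ≤
      32 * M ^ 2 *
        ((∫ p, (f₁ p.1 -
            (P[(fun q : X × ℝ => q.2)|
              MeasurableSpace.comap (Prod.fst : X × ℝ → X) inferInstance]) p) ^ 2 ∂P) +
          ∫ p, (f₂ p.1 -
            (P[(fun q : X × ℝ => q.2)|
              MeasurableSpace.comap (Prod.fst : X × ℝ → X) inferInstance]) p) ^ 2 ∂P) := by
  have hM0 : (0:ℝ) ≤ M := zero_le_one.trans hM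
  set m : MeasurableSpace (X × ℝ) := MeasurableSpace.comap (Prod.fst : X × ℝ → X) inferInstance
    with hmdef
  set g : X × ℝ → ℝ := P[(fun q : X × ℝ => q.2)|m] with hgdef
  have hm_le : m ≤ (Prod.instMeasurableSpace : MeasurableSpace (X × ℝ)) := by
    rw [hmdef]; exact measurable_fst.comap_le
  have hg_sm : AEStronglyMeasurable (m := Prod.instMeasurableSpace) g P := by
    rw [hgdef]
    exact (stronglyMeasurable_condExp.mono hm_le).aestronglyMeasurable
  have hg_bdd : ∀ᵐ p ∂P, |g p| ≤ M := by
    have h := ae_bdd_condExp_of_ae_bdd (m := m) (μ := P) (R := ⟨M, hM0⟩)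
      (f := fun q : X × ℝ => q.2) (by exact hy)
    exact h
  set u : X × ℝ → ℝ := fun p => (f₁ p.1 - p.2) ^ 2 - (f₂ p.1 - p.2) ^ 2 with hudef
  have hu_meas : AEStronglyMeasurable (m := Prod.instMeasurableSpace) u P := by
    apply Measurable.aestronglyMeasurable
    exact (((hf₁m.comp measurable_fst).sub measurable_snd).pow_const 2).sub
      (((hf₂m.comp measurable_fst).sub measurable_snd).pow_const 2)
  -- integrability of the excess-risk integrands
  have hsm1 : AEStronglyMeasurable (m := Prod.instMeasurableSpace) (fun p : X × ℝ => f₁ p.1 - g p) P :=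
    ((hf₁m.comp measurable_fst).aestronglyMeasurable).sub hg_sm
  have hsm2 : AEStronglyMeasurable (m := Prod.instMeasurableSpace) (fun p : X × ℝ => f₂ p.1 - g p) P :=
    ((hf₂m.comp measurable_fst).aestronglyMeasurable).sub hg_sm
  have hq1 : Integrable (fun p : X × ℝ => (f₁ p.1 - g p) ^ 2) P := by
    refine Integrable.mono' (integrable_const (4 * M ^ 2)) ?_ ?_
    · simpa [pow_two, Pi.mul_def] using hsm1.mul hsm1
    · filter_upwards [hg_bdd] with p hg
      have h1 := abs_le.mp (hf₁ p.1)
      have h2 := abs_le.mp hg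
      rw [Real.norm_eq_abs, abs_of_nonneg (sq_nonneg _)]
      nlinarith [h1.1, h1.2, h2.1, h2.2]
  have hq2 : Integrable (fun p : X × ℝ => (f₂ p.1 - g p) ^ 2) P := by
    refine Integrable.mono' (integrable_const (4 * M ^ 2)) ?_ ?_
    · simpa [pow_two, Pi.mul_def] using hsm2.mul hsm2
    · filter_upwards [hg_bdd] with p hg
      have h1 := abs_le.mp (hf₂ p.1)
      have h2 := abs_le.mp hg
      rw [Real.norm_eq_abs, abs_of_nonneg (sq_nonneg _)]
      nlinarith [h1.1, h1.2, h2.1, h2.2]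
  have step1 : variance u P ≤ ∫ p, (u p) ^ 2 ∂P := by
    simpa [Pi.pow_apply] using variance_le_expectation_sq (μ := P) hu_meas
  have step2 : ∫ p, (u p) ^ 2 ∂P ≤
      ∫ p, 32 * M ^ 2 * ((f₁ p.1 - g p) ^ 2 + (f₂ p.1 - g p) ^ 2) ∂P := by
    refine integral_mono_of_nonneg (Filter.Eventually.of_forall fun p => sq_nonneg _)
      ((hq1.add hq2).const_mul _) ?_
    filter_upwards [hy] with p hyp
    have ha := abs_le.mp (hf₁ p.1)
    have hb := abs_le.mp (hf₂ p.1)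
    have hyy := abs_le.mp hyp
    set a := f₁ p.1; set b := f₂ p.1; set c := g p; set y := p.2
    have hsq : (a + b - 2 * y) ^ 2 ≤ 16 * M ^ 2 := by nlinarith
    have h2 : (a - b) ^ 2 ≤ 2 * (a - c) ^ 2 + 2 * (b - c) ^ 2 := by
      nlinarith [sq_nonneg (a + b - 2 * c)]
    calc (u p) ^ 2 = (a - b) ^ 2 * (a + b - 2 * y) ^ 2 := by
          simp only [hudef]; ring
      _ ≤ (a - b) ^ 2 * (16 * M ^ 2) :=
          mul_le_mul_of_nonneg_left hsq (sq_nonneg _)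
      _ ≤ (2 * (a - c) ^ 2 + 2 * (b - c) ^ 2) * (16 * M ^ 2) :=
          mul_le_mul_of_nonneg_right h2 (by positivity)
      _ = 32 * M ^ 2 * ((a - c) ^ 2 + (b - c) ^ 2) := by ring
  calc variance u P ≤ ∫ p, (u p) ^ 2 ∂P := step1
    _ ≤ ∫ p, 32 * M ^ 2 * ((f₁ p.1 - g p) ^ 2 + (f₂ p.1 - g p) ^ 2) ∂P := step2
    _ = 32 * M ^ 2 * ((∫ p, (f₁ p.1 - g p) ^ 2 ∂P) + ∫ p, (f₂ p.1 - g p) ^ 2 ∂P) := by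
        rw [integral_const_mul, integral_add hq1 hq2]
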